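/- For every real r with 0 < r < 1/2, set a = (3(1 − r²) + √(1 + r⁴))/4 and (x₁, x₂, x₃) = (r, i·r, i·r²). Then: (i) a² + r² < 1, so (a, x₁) and (a, x₂) lie in 𝔹̄₂; (ii) (x₁, x₂, x₃) belongs to the closed tetrablock 𝔼̄; (iii) a ≤ (√(1 + r⁴) + (1 − r²))/2, and (a, x₁ + x₂, x₃) belongs to the closed pentablock ℙ̄; (iv) a > 1 − r², and taking z₁ = r, z₂ = −i·r one has a·√((1−r²)·(1−r²)) > |1 − x₁·z₁ − x₂·z₂ + x₃·z₁·z₂| = (1−r²)², so (a, x₁, x₂, x₃) does not belong to the closed hexablock ℍ̄. -/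

import Mathlib

open Complex

noncomputable section

/-- The closed tetrablock `𝔼̄ ⊆ ℂ³`. -/
def closedTetrablock : Set (ℂ × ℂ × ℂ) :=
  {x | ‖x.1‖ ≤ 1 ∧
    0 ≤ 1 + ‖x.1‖ ^ 2 - ‖x.2.1‖ ^ 2 - ‖x.2.2‖ ^ 2
      - 2 * ‖x.1 - (starRingEnd ℂ) x.2.1 * x.2.2‖}

/-- The closed hexablock `ℍ̄ ⊆ ℂ⁴`. -/
def closedHexablock : Set (ℂ × ℂ × ℂ × ℂ) :=
  {w | (w.2.1, w.2.2.1, w.2.2.2) ∈ closedTetrablock ∧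
    ∀ z₁ z₂ : ℂ, ‖z₁‖ < 1 → ‖z₂‖ < 1 →
      ‖w.1‖ * Real.sqrt ((1 - ‖z₁‖ ^ 2) * (1 - ‖z₂‖ ^ 2)) ≤
        ‖1 - w.2.1 * z₁ - w.2.2.1 * z₂ + w.2.2.2 * z₁ * z₂‖}

/-- The closed Euclidean unit ball `𝔹̄₂ ⊆ ℂ²`. -/
def closedBiball : Set (ℂ × ℂ) :=
  {z | ‖z.1‖ ^ 2 + ‖z.2‖ ^ 2 ≤ 1}

/-- The closed pentablock `ℙ̄ ⊆ ℂ³`. -/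
def closedPentablock : Set (ℂ × ℂ × ℂ) :=
  {w | ∃ b : Matrix (Fin 2) (Fin 2) ℂ, ‖Matrix.toEuclideanCLM (𝕜 := ℂ) b‖ ≤ 1 ∧
    w = (b 1 0, b 0 0 + b 1 1, b 0 0 * b 1 1 - b 0 1 * b 1 0)}

lemma hex_key_quartic (r s a : ℝ) (hr0 : 0 < r) (hr : r < 1/2)
    (hs2 : s^2 = 1 + r^4) (hsu : s ≤ 1 + r^4/2)
    (ha : 4*a = 3*(1-r^2) + s) :
    4*a^4 - 4*a^2*(1-r^2) + r^4 ≤ 0 := by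
  have ht : r^2 < 1/4 := by nlinarith
  have ht0 : 0 < r^2 := by positivity
  have e1 : 0 < 1 - 5*r^2 + 5*r^4 := by nlinarith [sq_nonneg (1/2 - r^2)]
  have hs3 : s^3 = s*(1+r^4) := by rw [← hs2]; ring
  have hs4 : s^4 = (1+r^4)^2 := by rw [show s^4 = (s^2)^2 by ring, hs2]
  have key2 : (2*(1 - 5*r^2 + 5*r^4) + 6*(1-r^2)*s)^2 ≤ 64*(1 - 2*r^2) := by
    have hcoef : 0 < 24*(1-r^2)*(1 - 5*r^2 + 5*r^4) := by nlinarith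
    have hb : 24*(1-r^2)*(1 - 5*r^2 + 5*r^4)*s ≤ 24*(1-r^2)*(1 - 5*r^2 + 5*r^4)*(1+r^4/2) :=
      mul_le_mul_of_nonneg_left hsu (le_of_lt hcoef)
    have hbr : 0 ≤ 4*r^2*(32 - 116*r^2 + 116*r^4 - 64*r^6 + 15*r^8) := by
      have hP : 0 ≤ 32 - 116*r^2 + 116*r^4 - 64*r^6 + 15*r^8 := by
        nlinarith [mul_pos (show (0:ℝ) < 1/4 - r^2 by linarith) (mul_pos ht0 ht0),
          sq_nonneg (r^4), ht, ht0]
      exact mul_nonneg (by positivity) hP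
    have hs2' : 36*(1-r^2)^2*s^2 = 36*(1-r^2)^2*(1+r^4) := by rw [hs2]
    nlinarith [hb, hbr, hs2']
  have ha' : a = (3*(1-r^2) + s)/4 := by linarith
  rw [ha']
  nlinarith [key2, hs2, hs3, hs4]

lemma hex_quad_form (r a u0 v0 p q : ℝ) (hr0 : 0 < r) (ha0 : 0 < a)
    (hu : u0^2 = r^2/2) (hv : 2*a*v0 = r^2)
    (hquart : 4*a^4 - 4*a^2*(1-r^2) + r^4 ≤ 0)
    (hmain : a^2 + r^2 < 1) :
    (u0*p + v0*q)^2 + (a*p + u0*q)^2 ≤ p^2 + q^2 := by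
  have ha2 : 0 < a^2 := by positivity
  have hα : 0 < 1 - r^2/2 - a^2 := by nlinarith
  have hv2 : 4*a^2*v0^2 = r^4 := by nlinarith [hv]
  have hid : 4*a^2*((1 - r^2/2 - a^2)*(1 - r^2/2 - v0^2) - (r^2/2)*(a+v0)^2)
      = -(4*a^4 - 4*a^2*(1-r^2) + r^4) := by
    linear_combination (a^2-1)*hv2 - 2*a^2*r^2*hv
  have hdet : 0 ≤ (1 - r^2/2 - a^2)*(1 - r^2/2 - v0^2) - (r^2/2)*(a+v0)^2 := by
    have h4 : 4*a^2*(0:ℝ) ≤ 4*a^2*((1 - r^2/2 - a^2)*(1 - r^2/2 - v0^2) - (r^2/2)*(a+v0)^2) := by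
      rw [hid]; linarith
    exact le_of_mul_le_mul_left h4 (by positivity)
  have hgoal : (u0*p + v0*q)^2 + (a*p + u0*q)^2
      = (r^2/2)*(p^2+q^2) + v0^2*q^2 + a^2*p^2 + 2*u0*(a+v0)*p*q := by
    linear_combination (p^2+q^2)*hu
  rw [hgoal]
  have hu2 : u0^2*(a+v0)^2 = r^2/2*(a+v0)^2 := by rw [hu]
  nlinarith [sq_nonneg ((1 - r^2/2 - a^2)*p - u0*(a+v0)*q), mul_nonneg hdet (sq_nonneg q), hα, hu2]

lemma hex_norm_le_one (r a : ℝ) (hr0 : 0 < r) (ha0 : 0 < a)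
    (hquart : 4*a^4 - 4*a^2*(1-r^2) + r^4 ≤ 0)
    (hmain : a^2 + r^2 < 1) :
    ‖Matrix.toEuclideanCLM (𝕜 := ℂ)
      !![((r:ℂ) + Complex.I*r)/2, -(Complex.I*(r:ℂ)^2)/(2*(a:ℂ));
         (a:ℂ), ((r:ℂ) + Complex.I*r)/2]‖ ≤ 1 := by
  set u : ℂ := ((r:ℂ) + Complex.I*r)/2 with hu_def
  set v : ℂ := -(Complex.I*(r:ℂ)^2)/(2*(a:ℂ)) with hv_def
  have hU : ‖u‖^2 = r^2/2 := by
    rw [Complex.sq_norm, hu_def, Complex.normSq_div]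
    simp [Complex.normSq_apply]
    all_goals ring
  have hV : 2*a*‖v‖ = r^2 := by
    rw [hv_def]
    rw [norm_div]
    simp [norm_mul, Complex.norm_I, Complex.norm_real, abs_of_pos hr0, abs_of_pos ha0]
    field_simp
  apply ContinuousLinearMap.opNorm_le_bound _ zero_le_one
  intro x
  rw [one_mul]
  have hx : ∀ i, (Matrix.toEuclideanCLM (𝕜 := ℂ) !![u, v; (a:ℂ), u]) x i
      = Matrix.mulVec !![u, v; (a:ℂ), u] (fun j => x j) i := fun i => rfl
  rw [EuclideanSpace.norm_eq, EuclideanSpace.norm_eq]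
  apply Real.sqrt_le_sqrt
  rw [Fin.sum_univ_two, Fin.sum_univ_two, hx 0, hx 1]
  have h0 : Matrix.mulVec !![u, v; (a:ℂ), u] (fun j => x j) 0 = u * x 0 + v * x 1 := by
    simp [Matrix.mulVec, dotProduct, Fin.sum_univ_two]
  have h1 : Matrix.mulVec !![u, v; (a:ℂ), u] (fun j => x j) 1 = (a:ℂ) * x 0 + u * x 1 := by
    simp [Matrix.mulVec, dotProduct, Fin.sum_univ_two]
  rw [h0, h1]
  set p := ‖x 0‖ with hp_def
  set q := ‖x 1‖ with hq_def
  have hp : 0 ≤ p := norm_nonneg _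
  have hq : 0 ≤ q := norm_nonneg _
  have t1 : ‖u * x 0 + v * x 1‖ ≤ ‖u‖ * p + ‖v‖ * q := by
    calc ‖u * x 0 + v * x 1‖ ≤ ‖u * x 0‖ + ‖v * x 1‖ :=
          norm_add_le _ _
      _ = ‖u‖ * p + ‖v‖ * q := by rw [norm_mul, norm_mul]
  have t2 : ‖(a:ℂ) * x 0 + u * x 1‖ ≤ a * p + ‖u‖ * q := by
    calc ‖(a:ℂ) * x 0 + u * x 1‖ ≤ ‖(a:ℂ) * x 0‖ + ‖u * x 1‖ :=
          norm_add_le _ _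
      _ = a * p + ‖u‖ * q := by
          rw [norm_mul, norm_mul, Complex.norm_real, Real.norm_eq_abs, abs_of_pos ha0]
  have key := hex_quad_form r a ‖u‖ ‖v‖ p q hr0 ha0 hU hV hquart hmain
  have b1 : ‖u * x 0 + v * x 1‖ ^ 2 ≤ (‖u‖ * p + ‖v‖ * q)^2 := by
    apply pow_le_pow_left₀ (norm_nonneg _) t1
  have b2 : ‖(a:ℂ) * x 0 + u * x 1‖ ^ 2 ≤ (a * p + ‖u‖ * q)^2 := by
    apply pow_le_pow_left₀ (norm_nonneg _) t2
  linarith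

set_option maxHeartbeats 1600000 in
theorem hexablock_counterexample (r : ℝ) (hr0 : 0 < r) (hr : r < 1 / 2)
    (a : ℝ) (ha : a = (3 * (1 - r ^ 2) + Real.sqrt (1 + r ^ 4)) / 4) :
    -- (i)
    (a ^ 2 + r ^ 2 < 1 ∧
      ((a : ℂ), (r : ℂ)) ∈ closedBiball ∧ ((a : ℂ), Complex.I * r) ∈ closedBiball) ∧
    -- (ii)
    ((r : ℂ), Complex.I * r, Complex.I * r ^ 2) ∈ closedTetrablock ∧
    -- (iii)
    (a ≤ (Real.sqrt (1 + r ^ 4) + (1 - r ^ 2)) / 2 ∧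
      ((a : ℂ), (r : ℂ) + Complex.I * r, Complex.I * r ^ 2) ∈ closedPentablock) ∧
    -- (iv)
    (1 - r ^ 2 < a ∧
      ‖1 - (r : ℂ) * (r : ℂ) - (Complex.I * r) * (-(Complex.I * r))
          + (Complex.I * r ^ 2) * (r : ℂ) * (-(Complex.I * r))‖ = (1 - r ^ 2) ^ 2 ∧
      (1 - r ^ 2) ^ 2 < a * Real.sqrt ((1 - r ^ 2) * (1 - r ^ 2)) ∧
      ((a : ℂ), (r : ℂ), Complex.I * r, Complex.I * r ^ 2) ∉ closedHexablock) := by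
  set s := Real.sqrt (1 + r ^ 4) with hs_def
  have hs2 : s^2 = 1 + r^4 := Real.sq_sqrt (by positivity)
  have hs0 : 0 ≤ s := Real.sqrt_nonneg _
  have hs1 : 1 ≤ s := by nlinarith [sq_nonneg r]
  have hsu : s ≤ 1 + r^4/2 := by nlinarith [sq_nonneg (r^4)]
  have ht0 : 0 < r^2 := by positivity
  have ht : r^2 < 1/4 := by nlinarith
  have ha4 : 4*a = 3*(1-r^2) + s := by rw [ha]; ring
  have ha0 : 0 < a := by nlinarith
  have hmain : a^2 + r^2 < 1 := by nlinarith [sq_nonneg (s-1)]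
  have ha1 : 1 - r^2 < a := by nlinarith
  have hr1 : r < 1 := by linarith
  have habsr : ‖(r:ℂ)‖ = r := by rw [Complex.norm_real, Real.norm_eq_abs, abs_of_pos hr0]
  have habsa : ‖(a:ℂ)‖ = a := by rw [Complex.norm_real, Real.norm_eq_abs, abs_of_pos ha0]
  have habsir : ‖Complex.I * r‖ = r := by
    rw [norm_mul, Complex.norm_I, one_mul, habsr]
  have habsir2 : ‖Complex.I * (r:ℂ)^2‖ = r^2 := by
    rw [norm_mul, Complex.norm_I, one_mul, norm_pow, habsr]
  refine ⟨⟨hmain, ?_, ?_⟩, ?_, ⟨?_, ?_⟩, ha1, ?_, ?_, ?_⟩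
  · simp only [closedBiball, Set.mem_setOf_eq, habsa, habsr]
    exact le_of_lt hmain
  · simp only [closedBiball, Set.mem_setOf_eq, habsa, habsir]
    exact le_of_lt hmain
  · -- tetrablock
    refine ⟨by rw [habsr]; linarith, ?_⟩
    have hcalc : (r:ℂ) - (starRingEnd ℂ) (Complex.I * r) * (Complex.I * (r:ℂ)^2)
        = ((r - r^3 : ℝ) : ℂ) := by
      rw [map_mul, Complex.conj_I, Complex.conj_ofReal]
      push_cast
      ring_nf
      rw [Complex.I_sq]
      ring
    rw [hcalc, habsr, habsir, habsir2, Complex.norm_real, Real.norm_eq_abs,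
      _root_.abs_of_nonneg (by nlinarith : (0:ℝ) ≤ r - r^3)]
    nlinarith
  · linarith
  · -- pentablock
    refine ⟨!![((r:ℂ) + Complex.I*r)/2, -(Complex.I*(r:ℂ)^2)/(2*(a:ℂ));
         (a:ℂ), ((r:ℂ) + Complex.I*r)/2], ?_, ?_⟩
    · exact hex_norm_le_one r a hr0 ha0 (hex_key_quartic r s a hr0 hr hs2 hsu ha4) hmain
    · have hane : (a:ℂ) ≠ 0 := by exact_mod_cast ne_of_gt ha0
      refine Prod.ext ?_ (Prod.ext ?_ ?_) <;> simp
      · field_simp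
        ring_nf
        rw [Complex.I_sq]
        ring
  · -- abs computation
    have hcalc : 1 - (r : ℂ) * (r : ℂ) - (Complex.I * r) * (-(Complex.I * r))
          + (Complex.I * r ^ 2) * (r : ℂ) * (-(Complex.I * r)) = (((1 - r^2)^2 : ℝ) : ℂ) := by
      push_cast
      ring_nf
      rw [Complex.I_sq]
      ring
    rw [hcalc, Complex.norm_real, Real.norm_eq_abs]
    exact _root_.abs_of_nonneg (by positivity)
  · rw [Real.sqrt_mul_self (by nlinarith : (0:ℝ) ≤ 1 - r^2)]
    nlinarith
  · -- not in hexablock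
    intro hmem
    obtain ⟨-, h2⟩ := hmem
    have hz1 : ‖((r:ℂ))‖ < 1 := by rw [habsr]; exact hr1
    have hz2 : ‖(-(Complex.I * r))‖ < 1 := by
      rw [norm_neg, habsir]; exact hr1
    have := h2 (r:ℂ) (-(Complex.I * r)) hz1 hz2
    simp only [habsa, habsr, norm_neg, habsir] at this
    have hcalc : 1 - (r : ℂ) * (r : ℂ) - (Complex.I * r) * (-(Complex.I * r))
          + (Complex.I * r ^ 2) * (r : ℂ) * (-(Complex.I * r)) = (((1 - r^2)^2 : ℝ) : ℂ) := by
      push_cast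
      ring_nf
      rw [Complex.I_sq]
      ring
    rw [hcalc, Complex.norm_real, Real.norm_eq_abs, _root_.abs_of_nonneg (by positivity : (0:ℝ) ≤ (1-r^2)^2),
      Real.sqrt_mul_self (by nlinarith : (0:ℝ) ≤ 1 - r^2)] at this
    nlinarith [mul_pos (show (0:ℝ) < a - (1-r^2) by linarith)
      (show (0:ℝ) < 1 - r^2 by nlinarith)]

end
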